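/- arXiv:1701.05487 — 2 statements merged into one kernel-verified Lean document; each statement's English description precedes it below -/
import Mathlib

section
/- Sample Size Bound: let (U, Σ) be a measurable space, D a probability measure on U, C* : U → {0,1} a measurable function, and H a finite nonempty set of measurable functions U → {0,1}. Let ε, δ ∈ (0,1) and let t ∈ ℕ satisfy t ≥ ln(|H|/δ)/ε. Then the probability, with respect to the t-fold product measure D^t, of the set of tuples (x₁,…,x_t) ∈ U^t such that every H ∈ H with H(x_i) = C*(x_i) for all i ∈ [t] satisfies D({x ∈ U : H(x) ≠ C*(x)}) < ε, is at least 1 − δ. -/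
open MeasureTheory
open scoped ENNReal

universe w

/-- Sample Size Bound, Lemma 5.1: if the finite hypothesis class `H` and the
sample size `t` satisfy `t ≥ ln(|H|/δ)/ε`, then with probability at least `1 - δ` over an
i.i.d. sample of `t` instances from `D`, every hypothesis in `H` that is consistent with the
sample (labelled by the target `C*`) has generalisation error less than `ε`. -/
theorem statement_11 {U : Type w} [MeasurableSpace U]
    (D : Measure U) [IsProbabilityMeasure D]
    (Cstar : U → Bool) (hC : Measurable Cstar)
    (H : Finset (U → Bool)) (hne : H.Nonempty) (hmeas : ∀ h ∈ H, Measurable h)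
    (ε δ : ℝ) (hε : ε ∈ Set.Ioo (0 : ℝ) 1) (hδ : δ ∈ Set.Ioo (0 : ℝ) 1)
    (t : ℕ) (ht : Real.log ((H.card : ℝ) / δ) / ε ≤ (t : ℝ)) :
    ENNReal.ofReal (1 - δ) ≤
      Measure.pi (fun _ : Fin t => D)
        {x : Fin t → U | ∀ h ∈ H, (∀ i, h (x i) = Cstar (x i)) →
          D {u | h u ≠ Cstar u} < ENNReal.ofReal ε} := by
  obtain ⟨hε0, hε1⟩ := hε
  obtain ⟨hδ0, hδ1⟩ := hδ
  set μ := Measure.pi (fun _ : Fin t => D) with hμ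
  set G := {x : Fin t → U | ∀ h ∈ H, (∀ i, h (x i) = Cstar (x i)) →
      D {u | h u ≠ Cstar u} < ENNReal.ofReal ε} with hG
  have hcardpos : (0 : ℝ) < (H.card : ℝ) := by
    exact_mod_cast Finset.card_pos.mpr hne
  -- the bad hypotheses
  set bad := H.filter (fun h => ¬ D {u | h u ≠ Cstar u} < ENNReal.ofReal ε) with hbad
  have hsub : Gᶜ ⊆ ⋃ h ∈ bad, {x : Fin t → U | ∀ i, h (x i) = Cstar (x i)} := by
    intro x hx
    simp only [hG, Set.mem_compl_iff, Set.mem_setOf_eq, not_forall] at hx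
    obtain ⟨h, hh, hcons, hbig⟩ := hx
    exact Set.mem_biUnion (Finset.mem_filter.mpr ⟨hh, hbig⟩) hcons
  -- bound on each bad hypothesis's consistency probability
  have hkey : ∀ h ∈ bad, μ {x : Fin t → U | ∀ i, h (x i) = Cstar (x i)}
      ≤ ENNReal.ofReal (δ / H.card) := by
    intro h hh
    rw [Finset.mem_filter, not_lt] at hh
    obtain ⟨hhH, hbig⟩ := hh
    have hBm : MeasurableSet {u | h u ≠ Cstar u} := by
      have : MeasurableSet {u | h u = Cstar u} :=
        measurableSet_eq_fun (hmeas h hhH) hC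
      exact this.compl
    have hset : {x : Fin t → U | ∀ i, h (x i) = Cstar (x i)}
        = Set.pi Set.univ (fun _ : Fin t => {u | h u = Cstar u}) := by
      ext x; simp [Set.mem_univ_pi]
    have hA : D {u | h u = Cstar u} ≤ ENNReal.ofReal (1 - ε) := by
      have hcompl : {u | h u = Cstar u} = {u | h u ≠ Cstar u}ᶜ := by
        ext u; simp
      rw [hcompl, measure_compl hBm (measure_ne_top _ _), measure_univ]
      calc (1 : ℝ≥0∞) - D {u | h u ≠ Cstar u} ≤ 1 - ENNReal.ofReal ε :=
            tsub_le_tsub_left hbig 1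
        _ = ENNReal.ofReal (1 - ε) := by
            rw [ENNReal.ofReal_sub _ (le_of_lt hε0), ENNReal.ofReal_one]
    have hμh : μ {x : Fin t → U | ∀ i, h (x i) = Cstar (x i)}
        ≤ ENNReal.ofReal (1 - ε) ^ t := by
      rw [hset, hμ, Measure.pi_pi]
      calc ∏ _i : Fin t, D {u | h u = Cstar u}
          ≤ ∏ _i : Fin t, ENNReal.ofReal (1 - ε) :=
            Finset.prod_le_prod' (fun i _ => hA)
        _ = ENNReal.ofReal (1 - ε) ^ t := by simp
    refine hμh.trans ?_
    rw [← ENNReal.ofReal_pow (by linarith)]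
    apply ENNReal.ofReal_le_ofReal
    have h1 : (1 - ε) ^ t ≤ Real.exp (-ε) ^ t :=
      pow_le_pow_left₀ (by linarith) (by linarith [Real.add_one_le_exp (-ε)]) t
    have h2 : Real.exp (-ε) ^ t = Real.exp (-(ε * t)) := by
      rw [← Real.exp_nat_mul]; ring_nf
    have h3 : Real.log ((H.card : ℝ) / δ) ≤ ε * t := by
      rw [div_le_iff₀ hε0] at ht; linarith [ht]
    have h4 : Real.exp (-(ε * t)) ≤ Real.exp (-Real.log ((H.card : ℝ) / δ)) :=
      Real.exp_le_exp.mpr (by linarith)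
    have h5 : Real.exp (-Real.log ((H.card : ℝ) / δ)) = δ / H.card := by
      rw [Real.exp_neg, Real.exp_log (by positivity)]
      field_simp
    calc (1 - ε) ^ t ≤ Real.exp (-(ε * t)) := by rw [← h2]; exact h1
      _ ≤ δ / H.card := by rw [← h5]; exact h4
  -- union bound
  have hGc : μ Gᶜ ≤ ENNReal.ofReal δ := by
    calc μ Gᶜ ≤ μ (⋃ h ∈ bad, {x : Fin t → U | ∀ i, h (x i) = Cstar (x i)}) :=
          measure_mono hsub
      _ ≤ ∑ h ∈ bad, μ {x : Fin t → U | ∀ i, h (x i) = Cstar (x i)} :=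
          measure_biUnion_finset_le _ _
      _ ≤ ∑ _h ∈ bad, ENNReal.ofReal (δ / H.card) := Finset.sum_le_sum hkey
      _ = (bad.card : ℝ≥0∞) * ENNReal.ofReal (δ / H.card) := by
          rw [Finset.sum_const, nsmul_eq_mul]
      _ ≤ (H.card : ℝ≥0∞) * ENNReal.ofReal (δ / H.card) := by
          gcongr
          exact Finset.filter_subset _ _
      _ = ENNReal.ofReal ((H.card : ℝ) * (δ / H.card)) := by
          rw [ENNReal.ofReal_mul (by positivity), ENNReal.ofReal_natCast]
      _ = ENNReal.ofReal δ := by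
          congr 1
          field_simp
  have hμprob : IsProbabilityMeasure μ := by rw [hμ]; infer_instance
  have huniv : (1 : ℝ≥0∞) ≤ μ G + μ Gᶜ := by
    have : μ Set.univ ≤ μ G + μ Gᶜ := by
      rw [← Set.union_compl_self G]; exact measure_union_le _ _
    simpa using this
  have : ENNReal.ofReal (1 - δ) = 1 - ENNReal.ofReal δ := by
    rw [ENNReal.ofReal_sub _ (le_of_lt hδ0), ENNReal.ofReal_one]
  rw [this, tsub_le_iff_right]
  calc (1 : ℝ≥0∞) ≤ μ G + μ Gᶜ := huniv
    _ ≤ μ G + ENNReal.ofReal δ := by gcongr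
end

section
/- Uniform Convergence: let (U, Σ) be a measurable space, D a probability measure on U × {0,1} (with {0,1} discrete), and H a finite nonempty set of measurable functions U → {0,1}. Let ε, δ ∈ (0,1) and let t ∈ ℕ satisfy t ≥ ln(2|H|/δ)/(2ε²). Then the probability, with respect to the t-fold product measure D^t, of the set of training sequences T = ((u₁,c₁),…,(u_t,c_t)) ∈ (U × {0,1})^t such that |err_D(H) − err_T(H)| < ε holds for every H ∈ H, is at least 1 − δ; here err_D(H) := D({(u,c) : H(u) ≠ c}) and err_T(H) := (1/t)·|{i ∈ [t] : H(u_i) ≠ c_i}|. -/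
open MeasureTheory

universe w

open ProbabilityTheory Real
open scoped ENNReal

section Auxiliary

/-- Hoeffding's lemma for a two-point (centered Bernoulli) distribution. -/
lemma hoeffding_bernoulli (p l : ℝ) (hp0 : 0 ≤ p) (hp1 : p ≤ 1) :
    (1 - p) * exp (l * (0 - p)) + p * exp (l * (1 - p)) ≤ exp (l ^ 2 / 8) := by
  set g : ℝ → ℝ := fun x => (1 - p) + p * exp x with hgdef
  have hg : ∀ x, 0 < g x := by
    intro x
    rcases eq_or_lt_of_le hp0 with h | h
    · simp [hgdef, ← h]
    · have := exp_pos x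
      have : 0 < p * exp x := mul_pos h this
      simp only [hgdef]; linarith
  set f : ℝ → ℝ := fun x => x ^ 2 / 8 + x * p - log (g x) with hfdef
  set f' : ℝ → ℝ := fun x => x / 4 + p - p * exp x / g x with hf'def
  set f'' : ℝ → ℝ := fun x => 1 / 4 - p * exp x * (1 - p) / (g x) ^ 2 with hf''def
  have hd1 : ∀ x, HasDerivAt f (f' x) x := by
    intro x
    have h1 : HasDerivAt (fun x : ℝ => x ^ 2 / 8 + x * p) (x / 4 + p) x := by
      have := ((hasDerivAt_pow 2 x).div_const 8).add ((hasDerivAt_id x).mul_const p)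
      refine this.congr_deriv ?_; norm_num; ring
    have h2 : HasDerivAt g (p * exp x) x := by
      simpa [hgdef] using ((Real.hasDerivAt_exp x).const_mul p).const_add (1 - p)
    exact h1.sub (h2.log (hg x).ne')
  have hd2 : ∀ x, HasDerivAt f' (f'' x) x := by
    intro x
    have h2 : HasDerivAt g (p * exp x) x := by
      simpa [hgdef] using ((Real.hasDerivAt_exp x).const_mul p).const_add (1 - p)
    have h3 : HasDerivAt (fun x => p * exp x) (p * exp x) x :=
      (Real.hasDerivAt_exp x).const_mul p
    have h4 := ((hasDerivAt_id x).div_const 4 |>.add_const p).sub (h3.div h2 (hg x).ne')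
    refine h4.congr_deriv ?_
    have := (hg x).ne'
    simp only [hf''def, hgdef]
    field_simp
    ring
  have hf''pos : ∀ x, 0 ≤ f'' x := by
    intro x
    have hglb : p * exp x * (1 - p) / (g x) ^ 2 ≤ 1 / 4 := by
      rw [div_le_iff₀ (pow_pos (hg x) 2)]
      nlinarith [sq_nonneg ((1 - p) - p * exp x)]
    simp only [hf''def]; linarith
  have hmono : Monotone f' :=
    monotone_of_deriv_nonneg (fun x => (hd2 x).differentiableAt)
      (fun x => by rw [(hd2 x).deriv]; exact hf''pos x)
  have hf'0 : f' 0 = 0 := by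
    simp [hf'def, hgdef]
  have hf0 : f 0 = 0 := by
    have : g 0 = 1 := by simp [hgdef]
    simp [hfdef, this]
  have hfnonneg : ∀ x, 0 ≤ f x := by
    intro x
    rcases le_total 0 x with h | h
    · have hm : MonotoneOn f (Set.Ici 0) := by
        apply monotoneOn_of_deriv_nonneg (convex_Ici 0)
          ((Differentiable.continuous (fun x => (hd1 x).differentiableAt)).continuousOn)
          (fun y _ => (hd1 y).differentiableAt.differentiableWithinAt)
        intro y hy
        rw [(hd1 y).deriv]
        simp only [interior_Ici, Set.mem_Ioi] at hy
        have : (0:ℝ) ≤ y := hy.le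
        calc (0:ℝ) = f' 0 := hf'0.symm
          _ ≤ f' y := hmono this
      have := hm (Set.self_mem_Ici) h h
      rwa [hf0] at this
    · have hm : AntitoneOn f (Set.Iic 0) := by
        apply antitoneOn_of_deriv_nonpos (convex_Iic 0)
          ((Differentiable.continuous (fun x => (hd1 x).differentiableAt)).continuousOn)
          (fun y _ => (hd1 y).differentiableAt.differentiableWithinAt)
        intro y hy
        rw [(hd1 y).deriv]
        simp only [interior_Iic, Set.mem_Iio] at hy
        have : y ≤ 0 := hy.le
        calc f' y ≤ f' 0 := hmono this
          _ = 0 := hf'0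
      have := hm h (Set.self_mem_Iic) h
      rwa [hf0] at this
  have hlog : log (g l) ≤ l ^ 2 / 8 + l * p := by
    have := hfnonneg l
    simp only [hfdef] at this
    linarith
  have hgl : g l ≤ exp (l ^ 2 / 8 + l * p) := by
    rw [← Real.exp_log (hg l)]
    exact exp_le_exp.mpr hlog
  have key : (1 - p) * exp (l * (0 - p)) + p * exp (l * (1 - p)) = exp (l * (0 - p)) * g l := by
    simp only [hgdef]
    rw [mul_add]
    rw [show l * (1 - p) = l + l * (0 - p) by ring, Real.exp_add]
    ring
  rw [key]
  calc exp (l * (0 - p)) * g l ≤ exp (l * (0 - p)) * exp (l ^ 2 / 8 + l * p) := by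
        exact mul_le_mul_of_nonneg_left hgl (exp_pos _).le
    _ = exp (l ^ 2 / 8) := by rw [← Real.exp_add]; ring_nf


section PiAux

variable {ι : Type*} [Fintype ι] [DecidableEq ι] {α : ι → Type*} [∀ i, MeasurableSpace (α i)]

lemma map_eval_pi (ν : ∀ i, Measure (α i)) [∀ i, IsProbabilityMeasure (ν i)] (i : ι) :
    (Measure.pi ν).map (fun ω => ω i) = ν i := by
  ext E hE
  rw [Measure.map_apply (measurable_pi_apply i) hE, show (fun ω : ∀ j, α j => ω i) = Function.eval i from rfl,
    Set.eval_preimage, Measure.pi_pi]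
  rw [Finset.prod_eq_single i (fun j _ hj => by simp [Function.update_of_ne hj]) (by simp)]
  simp

lemma iIndepFun_eval (ν : ∀ i, Measure (α i)) [∀ i, IsProbabilityMeasure (ν i)] :
    iIndepFun (fun (i : ι) (ω : ∀ j, α j) => ω i) (Measure.pi ν) := by
  rw [iIndepFun_iff_measure_inter_preimage_eq_mul]
  intro S sets hsets
  have key : ∀ (s : Finset ι), (∀ i ∈ s, MeasurableSet (sets i)) →
      Measure.pi ν (⋂ i ∈ s, (fun ω : ∀ j, α j => ω i) ⁻¹' sets i)
        = ∏ i ∈ s, ν i (sets i) := by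
    intro s hs
    have heq : (⋂ i ∈ s, (fun ω : ∀ j, α j => ω i) ⁻¹' sets i)
        = Set.pi Set.univ (fun i => if i ∈ s then sets i else Set.univ) := by
      ext ω
      simp only [Set.mem_iInter, Set.mem_preimage, Set.mem_pi, Set.mem_univ, true_implies]
      constructor
      · intro h j
        by_cases hj : j ∈ s
        · simpa [hj] using h j hj
        · simp [hj]
      · intro h j hj
        have := h j
        simpa [hj] using this
    rw [heq, Measure.pi_pi]
    rw [← Finset.prod_subset (Finset.subset_univ s) (fun j _ hj => by simp [hj])]
    exact Finset.prod_congr rfl fun j hj => by simp [hj]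
  rw [key S hsets]
  exact Finset.prod_congr rfl fun i hi => by
    have := key {i} (by simpa using hsets i hi)
    simp only [Finset.mem_singleton, Set.iInter_iInter_eq_left, Finset.prod_singleton] at this
    exact this.symm

end PiAux

lemma chernoff_sum {Ω : Type*} [MeasurableSpace Ω] (μ : Measure Ω) [IsProbabilityMeasure μ]
    {t : ℕ} (X : Fin t → Ω → ℝ) (hX : ∀ i, Measurable (X i))
    (hb : ∀ i ω, |X i ω| ≤ 1)
    (hindep : iIndepFun X μ)
    (hmgf : ∀ i l, mgf (X i) μ l ≤ exp (l ^ 2 / 8))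
    (ε : ℝ) (hε : 0 < ε) :
    (μ {ω | (t : ℝ) * ε ≤ ∑ i, X i ω}).toReal ≤ exp (-2 * t * ε ^ 2) := by
  have hmeasS : Measurable (∑ i, X i) := by
    rw [Finset.sum_fn]
    exact Finset.measurable_sum Finset.univ (fun i _ => hX i)
  have h_int : Integrable (fun ω => exp (4 * ε * (∑ i, X i) ω)) μ := by
    refine Integrable.mono' (integrable_const (exp (4 * ε * t)))
      ((hmeasS.const_mul _).exp.aestronglyMeasurable) (ae_of_all _ fun ω => ?_)
    rw [norm_eq_abs, abs_exp]
    apply exp_le_exp.mpr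
    have hsum : (∑ i, X i) ω ≤ t := by
      rw [Finset.sum_apply]
      calc ∑ i, X i ω ≤ ∑ _i : Fin t, (1 : ℝ) :=
            Finset.sum_le_sum fun i _ => (abs_le.mp (hb i ω)).2
        _ = t := by simp
    have h4 : (0:ℝ) ≤ 4 * ε := by linarith
    exact mul_le_mul_of_nonneg_left hsum h4
  have key := measure_ge_le_exp_mul_mgf (μ := μ) (X := ∑ i, X i) ((t : ℝ) * ε)
    (by linarith) h_int
  have hset : {ω | (t : ℝ) * ε ≤ ∑ i, X i ω} = {ω | (t : ℝ) * ε ≤ (∑ i, X i) ω} := by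
    ext ω; simp [Finset.sum_apply]
  rw [hset]
  refine key.trans ?_
  have hmgfS : mgf (∑ i, X i) μ (4 * ε) = ∏ i, mgf (X i) μ (4 * ε) := by
    simpa using hindep.mgf_sum hX Finset.univ
  rw [hmgfS]
  have hprod : ∏ i, mgf (X i) μ (4 * ε) ≤ exp ((4 * ε) ^ 2 / 8) ^ t := by
    calc ∏ i, mgf (X i) μ (4 * ε) ≤ ∏ _i : Fin t, exp ((4 * ε) ^ 2 / 8) :=
          Finset.prod_le_prod (fun i _ => mgf_nonneg) (fun i _ => hmgf i _)
      _ = exp ((4 * ε) ^ 2 / 8) ^ t := by simp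
  calc exp (-(4 * ε) * ((t : ℝ) * ε)) * ∏ i, mgf (X i) μ (4 * ε)
      ≤ exp (-(4 * ε) * ((t : ℝ) * ε)) * exp ((4 * ε) ^ 2 / 8) ^ t :=
        mul_le_mul_of_nonneg_left hprod (exp_pos _).le
    _ = exp (-2 * t * ε ^ 2) := by
        rw [← Real.exp_nat_mul, ← Real.exp_add]
        congr 1
        ring


lemma mgf_comp_eval {ι : Type*} [Fintype ι] [DecidableEq ι] {α : ι → Type*}
    [∀ i, MeasurableSpace (α i)] (ν : ∀ i, Measure (α i)) [∀ i, IsProbabilityMeasure (ν i)]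
    (i : ι) (φ : α i → ℝ) (hφ : Measurable φ) (l : ℝ)
    (hmp : (Measure.pi ν).map (fun ω => ω i) = ν i) :
    mgf (fun ω : ∀ j, α j => φ (ω i)) (Measure.pi ν) l = mgf φ (ν i) l := by
  rw [mgf, mgf, ← hmp,
    integral_map (measurable_pi_apply i).aemeasurable
      ((hφ.const_mul l).exp.aestronglyMeasurable)]

lemma mgf_indicator_sub {Ω : Type*} [MeasurableSpace Ω] (μ : Measure Ω)
    [IsProbabilityMeasure μ] (A : Set Ω) (hA : MeasurableSet A) (l : ℝ) :
    mgf (fun x => A.indicator (fun _ => (1:ℝ)) x - (μ A).toReal) μ l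
      = (1 - (μ A).toReal) * exp (l * (0 - (μ A).toReal))
        + (μ A).toReal * exp (l * (1 - (μ A).toReal)) := by
  set p := (μ A).toReal with hp
  have hfun : ∀ x, exp (l * (A.indicator (fun _ => (1:ℝ)) x - p))
      = A.indicator (fun _ => exp (l * (1 - p))) x
        + Aᶜ.indicator (fun _ => exp (l * (0 - p))) x := by
    intro x
    by_cases hx : x ∈ A <;> simp [Set.indicator_apply, hx]
  rw [mgf]
  calc ∫ x, exp (l * (A.indicator (fun _ => (1:ℝ)) x - p)) ∂μ
      = ∫ x, (A.indicator (fun _ => exp (l * (1 - p))) x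
          + Aᶜ.indicator (fun _ => exp (l * (0 - p))) x) ∂μ := by
        exact integral_congr_ae (ae_of_all _ hfun)
    _ = (μ A).toReal * exp (l * (1 - p)) + (μ Aᶜ).toReal * exp (l * (0 - p)) := by
        rw [integral_add ((integrable_const _).indicator hA)
          ((integrable_const _).indicator hA.compl),
          integral_indicator_const _ hA, integral_indicator_const _ hA.compl]
        simp [smul_eq_mul]
        rfl
    _ = (1 - p) * exp (l * (0 - p)) + p * exp (l * (1 - p)) := by
        have hcompl : (μ Aᶜ).toReal = 1 - p := by
          rw [measure_compl hA (measure_ne_top μ A), measure_univ,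
            ENNReal.toReal_sub_of_le prob_le_one (by simp)]
          simp [hp]
        rw [hcompl]; ring


/-- One-sided Hoeffding bound for empirical frequencies under a product measure. -/
lemma chernoff_pi {V : Type*} [MeasurableSpace V] (D : Measure V) [IsProbabilityMeasure D]
    (t : ℕ) (A : Set V) (hA : MeasurableSet A) (ε : ℝ) (hε : 0 < ε) :
    (Measure.pi (fun _ : Fin t => D)
      {ω | (t : ℝ) * ε ≤ ∑ i, (A.indicator (fun _ => (1:ℝ)) (ω i) - (D A).toReal)}).toReal
      ≤ exp (-2 * t * ε ^ 2) := by
  set p := (D A).toReal with hp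
  have hp0 : 0 ≤ p := ENNReal.toReal_nonneg
  have hp1 : p ≤ 1 := by
    have := ENNReal.toReal_mono (by simp) (prob_le_one (μ := D) (s := A))
    simpa using this
  set φ : V → ℝ := fun x => A.indicator (fun _ => (1:ℝ)) x - p with hφdef
  have hφ : Measurable φ := (measurable_const.indicator hA).sub measurable_const
  set X : Fin t → (Fin t → V) → ℝ := fun i ω => φ (ω i) with hXdef
  have hX : ∀ i, Measurable (X i) := fun i => hφ.comp (measurable_pi_apply i)
  have hb : ∀ i ω, |X i ω| ≤ 1 := by
    intro i ω
    rw [abs_le]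
    simp only [hXdef, hφdef]
    by_cases hx : ω i ∈ A
    · rw [Set.indicator_of_mem hx]; constructor <;> linarith
    · rw [Set.indicator_of_notMem hx]; constructor <;> linarith
  have hindep : iIndepFun X (Measure.pi (fun _ : Fin t => D)) :=
    (iIndepFun_eval (fun _ : Fin t => D)).comp (fun _ => φ) (fun _ => hφ)
  have hmgf : ∀ i l, mgf (X i) (Measure.pi (fun _ : Fin t => D)) l ≤ exp (l ^ 2 / 8) := by
    intro i l
    have h1 : mgf (X i) (Measure.pi (fun _ : Fin t => D)) l = mgf φ D l :=
      mgf_comp_eval (fun _ : Fin t => D) i φ hφ l (map_eval_pi _ i)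
    rw [h1]
    have h2 := mgf_indicator_sub D A hA l
    rw [show φ = fun x => A.indicator (fun _ => (1:ℝ)) x - (D A).toReal from rfl, h2]
    exact hoeffding_bernoulli p l hp0 hp1
  exact chernoff_sum _ X hX hb hindep hmgf ε hε

end Auxiliary

/-- Uniform Convergence, Lemma 5.8: if the finite hypothesis class `H` and the
sample size `t` satisfy `t ≥ ln(2|H|/δ)/(2ε²)`, then with probability at least `1 - δ` over an
i.i.d. sample of `t` labelled examples from a distribution `D` on `U × {0,1}`, for every
`H ∈ H` the training error is within `ε` of the generalisation error. -/
theorem statement_12 {U : Type w} [MeasurableSpace U]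
    (D : Measure (U × Bool)) [IsProbabilityMeasure D]
    (H : Finset (U → Bool)) (hne : H.Nonempty) (hmeas : ∀ h ∈ H, Measurable h)
    (ε δ : ℝ) (hε : ε ∈ Set.Ioo (0 : ℝ) 1) (hδ : δ ∈ Set.Ioo (0 : ℝ) 1)
    (t : ℕ) (ht : Real.log (2 * (H.card : ℝ) / δ) / (2 * ε ^ 2) ≤ (t : ℝ)) :
    ENNReal.ofReal (1 - δ) ≤
      Measure.pi (fun _ : Fin t => D)
        {T : Fin t → U × Bool | ∀ h ∈ H,
          |(D {p | h p.1 ≠ p.2}).toReal -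
            (Set.ncard {i : Fin t | h (T i).1 ≠ (T i).2} : ℝ) / (t : ℝ)| < ε} := by
  classical
  obtain ⟨hε0, hε1⟩ := hε
  obtain ⟨hδ0, hδ1⟩ := hδ
  set μ := Measure.pi (fun _ : Fin t => D) with hμdef
  have hμprob : IsProbabilityMeasure μ := by
    rw [hμdef]; infer_instance
  have hm1 : (1:ℝ) ≤ (H.card : ℝ) := by
    exact_mod_cast Nat.one_le_iff_ne_zero.mpr (Finset.card_ne_zero_of_mem hne.choose_spec)
  have hlogpos : 0 < Real.log (2 * (H.card : ℝ) / δ) := by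
    apply Real.log_pos
    rw [lt_div_iff₀ hδ0]
    nlinarith
  have htpos : (0:ℝ) < (t : ℝ) := by
    have h2 : 0 < 2 * ε ^ 2 := by positivity
    calc (0:ℝ) < Real.log (2 * (H.card : ℝ) / δ) / (2 * ε ^ 2) := div_pos hlogpos h2
      _ ≤ t := ht
  -- the bad event for each hypothesis
  set Bad : (U → Bool) → Set (Fin t → U × Bool) := fun h =>
    {T | ε ≤ |(D {p | h p.1 ≠ p.2}).toReal -
      (Set.ncard {i : Fin t | h (T i).1 ≠ (T i).2} : ℝ) / (t : ℝ)|} with hBaddef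
  have hbad : ∀ h ∈ H, μ (Bad h) ≤ ENNReal.ofReal (2 * exp (-2 * t * ε ^ 2)) := by
    intro h hh
    set A : Set (U × Bool) := {x | h x.1 ≠ x.2} with hAdef
    have hA : MeasurableSet A := by
      have : A = (fun x : U × Bool => (h x.1, x.2)) ⁻¹' {y : Bool × Bool | y.1 ≠ y.2} := rfl
      rw [this]
      exact (((hmeas h hh).comp measurable_fst).prodMk measurable_snd)
        ((Set.to_countable _).measurableSet)
    set p := (D A).toReal with hpdef
    set Sp : Set (Fin t → U × Bool) :=
      {ω | (t : ℝ) * ε ≤ ∑ i, (A.indicator (fun _ => (1:ℝ)) (ω i) - (D A).toReal)} with hSpdef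
    set Sm : Set (Fin t → U × Bool) :=
      {ω | (t : ℝ) * ε ≤ ∑ i, (Aᶜ.indicator (fun _ => (1:ℝ)) (ω i) - (D Aᶜ).toReal)} with hSmdef
    have hDc : (D Aᶜ).toReal = 1 - p := by
      rw [measure_compl hA (measure_ne_top D A), measure_univ,
        ENNReal.toReal_sub_of_le prob_le_one (by simp)]
      simp [hpdef]
    have hsubset : Bad h ⊆ Sp ∪ Sm := by
      intro T hT
      simp only [hBaddef, Set.mem_setOf_eq] at hT
      set c : ℝ := (Set.ncard {i : Fin t | h (T i).1 ≠ (T i).2} : ℝ) with hcdef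
      have hc : c = ∑ i, A.indicator (fun _ => (1:ℝ)) (T i) := by
        have h1 : {i : Fin t | h (T i).1 ≠ (T i).2}.ncard
            = (Finset.univ.filter (fun i : Fin t => h (T i).1 ≠ (T i).2)).card := by
          rw [← Set.ncard_coe_finset]
          congr 1
          ext i; simp
        have h2 : ∑ i, A.indicator (fun _ => (1:ℝ)) (T i)
            = ∑ i : Fin t, if h (T i).1 ≠ (T i).2 then (1:ℝ) else 0 := by
          apply Finset.sum_congr rfl
          intro i _
          rw [Set.indicator_apply]
          rfl
        rw [hcdef, h1, h2, Finset.sum_boole]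
      have hcompl : ∑ i, Aᶜ.indicator (fun _ => (1:ℝ)) (T i)
          = (t : ℝ) - ∑ i, A.indicator (fun _ => (1:ℝ)) (T i) := by
        rw [eq_sub_iff_add_eq, ← Finset.sum_add_distrib]
        have : ∀ i : Fin t, Aᶜ.indicator (fun _ => (1:ℝ)) (T i)
            + A.indicator (fun _ => (1:ℝ)) (T i) = 1 := by
          intro i
          by_cases hx : T i ∈ A
          · rw [Set.indicator_of_mem hx, Set.indicator_of_notMem (by simpa using hx)]; ring
          · rw [Set.indicator_of_notMem hx, Set.indicator_of_mem (by simpa using hx)]; ring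
        rw [Finset.sum_congr rfl (fun i _ => this i)]
        simp
      rcases le_abs.mp hT with h1 | h1
      · -- ε ≤ p - c/t : too few errors observed, Sm
        right
        simp only [hSmdef, Set.mem_setOf_eq]
        rw [Finset.sum_sub_distrib, hcompl, hDc, Finset.sum_const, ← hc]
        have : c / t ≤ p - ε := by linarith
        rw [div_le_iff₀ htpos] at this
        simp only [Finset.card_univ, Fintype.card_fin, nsmul_eq_mul]
        nlinarith
      · -- ε ≤ c/t - p : Sp
        left
        simp only [hSpdef, Set.mem_setOf_eq]
        rw [Finset.sum_sub_distrib, Finset.sum_const, ← hc]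
        have : p + ε ≤ c / t := by linarith
        rw [le_div_iff₀ htpos] at this
        simp only [Finset.card_univ, Fintype.card_fin, nsmul_eq_mul]
        rw [← hpdef]
        nlinarith
    have hSp : μ Sp ≤ ENNReal.ofReal (exp (-2 * t * ε ^ 2)) := by
      rw [← ENNReal.ofReal_toReal (measure_ne_top μ Sp)]
      exact ENNReal.ofReal_le_ofReal (chernoff_pi D t A hA ε hε0)
    have hSm : μ Sm ≤ ENNReal.ofReal (exp (-2 * t * ε ^ 2)) := by
      rw [← ENNReal.ofReal_toReal (measure_ne_top μ Sm)]
      exact ENNReal.ofReal_le_ofReal (chernoff_pi D t Aᶜ hA.compl ε hε0)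
    calc μ (Bad h) ≤ μ (Sp ∪ Sm) := measure_mono hsubset
      _ ≤ μ Sp + μ Sm := measure_union_le _ _
      _ ≤ ENNReal.ofReal (exp (-2 * t * ε ^ 2)) + ENNReal.ofReal (exp (-2 * t * ε ^ 2)) :=
          add_le_add hSp hSm
      _ = ENNReal.ofReal (2 * exp (-2 * t * ε ^ 2)) := by
          rw [← ENNReal.ofReal_add (exp_pos _).le (exp_pos _).le]; ring_nf
  -- total bad probability
  set Good : Set (Fin t → U × Bool) :=
    {T | ∀ h ∈ H, |(D {p | h p.1 ≠ p.2}).toReal -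
      (Set.ncard {i : Fin t | h (T i).1 ≠ (T i).2} : ℝ) / (t : ℝ)| < ε} with hGooddef
  have hGoodc : Goodᶜ ⊆ ⋃ h ∈ H, Bad h := by
    intro T hT
    simp only [hGooddef, Set.mem_compl_iff, Set.mem_setOf_eq, not_forall] at hT
    obtain ⟨h, hh, hge⟩ := hT
    rw [Set.mem_iUnion₂]
    exact ⟨h, hh, le_of_not_gt hge⟩
  have hδbound : (H.card : ℝ) * (2 * exp (-2 * t * ε ^ 2)) ≤ δ := by
    have hlog : Real.log (2 * (H.card : ℝ) / δ) ≤ (t : ℝ) * (2 * ε ^ 2) := by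
      rw [div_le_iff₀ (by positivity : (0:ℝ) < 2 * ε ^ 2)] at ht
      linarith
    have harg : (0:ℝ) < 2 * (H.card : ℝ) / δ := by positivity
    have := (Real.log_le_iff_le_exp harg).mp hlog
    have hexp : exp (-2 * t * ε ^ 2) = (exp ((t : ℝ) * (2 * ε ^ 2)))⁻¹ := by
      rw [← Real.exp_neg]; congr 1; ring
    rw [div_le_iff₀ hδ0] at this
    rw [hexp]
    rw [mul_comm (2:ℝ) (exp _)⁻¹, ← mul_assoc, mul_comm _ ((exp _)⁻¹), mul_assoc] at *
    have hepos := exp_pos ((t : ℝ) * (2 * ε ^ 2))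
    rw [inv_mul_le_iff₀ hepos]
    calc (H.card : ℝ) * 2 ≤ δ * exp ((t:ℝ) * (2 * ε ^ 2)) := by linarith
      _ = exp ((t:ℝ) * (2 * ε ^ 2)) * δ := by ring
  have hμbad : μ Goodᶜ ≤ ENNReal.ofReal δ := by
    calc μ Goodᶜ ≤ μ (⋃ h ∈ H, Bad h) := measure_mono hGoodc
      _ ≤ ∑ h ∈ H, μ (Bad h) := measure_biUnion_finset_le H Bad
      _ ≤ ∑ _h ∈ H, ENNReal.ofReal (2 * exp (-2 * t * ε ^ 2)) :=
          Finset.sum_le_sum hbad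
      _ = (H.card : ℝ≥0∞) * ENNReal.ofReal (2 * exp (-2 * t * ε ^ 2)) := by
          rw [Finset.sum_const, nsmul_eq_mul]
      _ = ENNReal.ofReal ((H.card : ℝ) * (2 * exp (-2 * t * ε ^ 2))) := by
          rw [← ENNReal.ofReal_natCast H.card, ← ENNReal.ofReal_mul (by positivity)]
      _ ≤ ENNReal.ofReal δ := ENNReal.ofReal_le_ofReal hδbound
  have h1 : (1 : ℝ≥0∞) ≤ μ Good + ENNReal.ofReal δ := by
    calc (1 : ℝ≥0∞) = μ Set.univ := (measure_univ (μ := μ)).symm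
      _ = μ (Good ∪ Goodᶜ) := by rw [Set.union_compl_self]
      _ ≤ μ Good + μ Goodᶜ := measure_union_le _ _
      _ ≤ μ Good + ENNReal.ofReal δ := add_le_add_right hμbad _
  have : ENNReal.ofReal (1 - δ) = 1 - ENNReal.ofReal δ := by
    rw [ENNReal.ofReal_sub 1 hδ0.le, ENNReal.ofReal_one]
  rw [this]
  exact tsub_le_iff_right.mpr h1
end
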